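/- Hom(ℚ, ℤ) = 0 and Hom(ℤ^ω/⊕_ω ℤ, ℤ) = 0. -/

import Mathlib

/-- The subgroup ⊕_ω ℤ of finitely supported sequences inside ℤ^ω. -/
noncomputable def finSuppSubgroup : AddSubgroup (ℕ → ℤ) :=
  (Finsupp.coeFnAddHom : (ℕ →₀ ℤ) →+ (ℕ → ℤ)).range

lemma mem_finSuppSubgroup_of_bound (x : ℕ → ℤ) (k : ℕ) (h : ∀ n, k ≤ n → x n = 0) :
    x ∈ finSuppSubgroup := by
  refine ⟨∑ i ∈ Finset.range k, Finsupp.single i (x i), ?_⟩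
  ext n
  rw [map_sum]
  simp only [Finsupp.coeFnAddHom_apply, Finset.sum_apply, Finsupp.single_apply]
  rw [Finset.sum_ite_eq' (Finset.range k) n]
  by_cases hn : n < k
  · simp [hn]
  · simp [hn, h n (le_of_not_gt hn)]

lemma pow_dvd_phi (φ : (ℕ → ℤ) →+ ℤ) (hφ : ∀ s ∈ finSuppSubgroup, φ s = 0)
    (a : ℤ) (b : ℕ → ℤ) (k : ℕ) : a ^ k ∣ φ (fun n => a ^ n * b n) := by
  set u : ℕ → ℤ := fun n => a ^ n * b n with hu
  set t : ℕ → ℤ := fun n => if n < k then u n else 0 with ht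
  set w : ℕ → ℤ := fun n => if n < k then 0 else a ^ (n - k) * b n with hw
  have hdec : u = t + a ^ k • w := by
    funext n
    by_cases hn : n < k
    · simp [ht, hw, hn]
    · have : k + (n - k) = n := by omega
      simp only [ht, hw, hn, if_neg, Pi.add_apply, Pi.smul_apply, smul_eq_mul, if_false]
      rw [zero_add, ← mul_assoc, ← pow_add, this]
  have h1 : φ t = 0 := hφ t (mem_finSuppSubgroup_of_bound t k (fun n hn => by simp [ht, Nat.not_lt.mpr hn]))
  rw [hdec, map_add, h1, zero_add, map_zsmul, smul_eq_mul]
  exact Dvd.intro _ rfl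

lemma int_eq_zero_of_dvd (m : ℤ) (a : ℤ) (ha : 2 ≤ a) (h : ∀ k : ℕ, a ^ k ∣ m) : m = 0 := by
  by_contra hm
  set k := m.natAbs with hk
  have h1 : a ^ k ≤ |m| := Int.le_of_dvd (abs_pos.mpr hm) ((dvd_abs _ _).mpr (h k))
  have h2 : |m| < 2 ^ k := by
    rw [Int.abs_eq_natAbs, ← hk]
    exact_mod_cast Nat.lt_two_pow_self (n := k)
  have h3 : (2:ℤ) ^ k ≤ a ^ k := pow_le_pow_left₀ (by norm_num) ha k
  omega

theorem hom_rat_int_zero_and_hom_specker_quotient_int_zero :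
    (∀ f : ℚ →+ ℤ, f = 0) ∧
    (∀ g : ((ℕ → ℤ) ⧸ finSuppSubgroup) →+ ℤ, g = 0) := by
  constructor
  · intro f
    ext q
    show f q = 0
    refine int_eq_zero_of_dvd _ 2 le_rfl (fun k => ?_)
    have hq : q = (2 ^ k : ℤ) • (q / 2 ^ k) := by
      rw [zsmul_eq_mul]
      push_cast
      field_simp
    rw [hq, map_zsmul, smul_eq_mul]
    exact Dvd.intro _ rfl
  · intro g
    set φ : (ℕ → ℤ) →+ ℤ := g.comp (QuotientAddGroup.mk' finSuppSubgroup) with hφdef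
    have hφ : ∀ s ∈ finSuppSubgroup, φ s = 0 := by
      intro s hs
      simp only [hφdef, AddMonoidHom.comp_apply, QuotientAddGroup.mk'_apply]
      rw [(QuotientAddGroup.eq_zero_iff s).mpr hs, map_zero]
    have hzero : ∀ x : ℕ → ℤ, φ x = 0 := by
      intro x
      have cop : ∀ n : ℕ, IsCoprime ((2:ℤ) ^ n) ((3:ℤ) ^ n) := by
        intro n
        exact (Int.isCoprime_iff_gcd_eq_one.mpr (by decide)).pow
      have key : ∀ n : ℕ, ∃ p q : ℤ, x n = 2 ^ n * p + 3 ^ n * q := by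
        intro n
        obtain ⟨a', b', hab⟩ := cop n
        exact ⟨a' * x n, b' * x n, by linear_combination (x n) * hab.symm⟩
      choose b c hbc using key
      have hx : x = (fun n => (2:ℤ) ^ n * b n) + (fun n => (3:ℤ) ^ n * c n) := by
        funext n; exact hbc n
      have h2 : φ (fun n => (2:ℤ) ^ n * b n) = 0 :=
        int_eq_zero_of_dvd _ 2 le_rfl (fun k => pow_dvd_phi φ hφ 2 b k)
      have h3 : φ (fun n => (3:ℤ) ^ n * c n) = 0 :=
        int_eq_zero_of_dvd _ 3 (by norm_num) (fun k => pow_dvd_phi φ hφ 3 c k)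
      rw [hx, map_add, h2, h3, add_zero]
    ext q
    simpa [hφdef] using hzero q
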